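/- For every real number x ≠ 0 and every C > 0, |∫_0^C sin(sx)/s ds − sgn(x)·π/2| ≤ 2/(C|x|). -/

import Mathlib

open MeasureTheory intervalIntegral Real
open Set


lemma inner_int (s T : ℝ) :
    ∫ t in (0:ℝ)..T, Real.exp (-(t * s)) * Real.sin t
      = (1 - Real.exp (-(T * s)) * (Real.cos T + s * Real.sin T)) / (1 + s ^ 2) := by
  have hs : (1 : ℝ) + s ^ 2 ≠ 0 := by positivity
  have h : ∀ t ∈ Set.uIcc (0:ℝ) T,
      HasDerivAt (fun t => -(Real.exp (-(t * s)) * (s * Real.sin t + Real.cos t)) / (1 + s ^ 2))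
        (Real.exp (-(t * s)) * Real.sin t) t := by
    intro t _
    have h1 : HasDerivAt (fun t : ℝ => Real.exp (-(t * s))) (-s * Real.exp (-(t * s))) t := by
      have : HasDerivAt (fun t : ℝ => -(t * s)) (-s) t := by
        simpa using ((hasDerivAt_id t).mul_const s).fun_neg
      simpa [mul_comm] using this.exp
    have h2 : HasDerivAt (fun t : ℝ => s * Real.sin t + Real.cos t)
        (s * Real.cos t - Real.sin t) t := by
      simpa [sub_eq_add_neg] using ((Real.hasDerivAt_sin t).const_mul s).fun_add (Real.hasDerivAt_cos t)
    have := ((h1.fun_mul h2).fun_neg).div_const (1 + s ^ 2)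
    refine this.congr_deriv ?_
    rw [div_eq_iff hs]
    ring
  rw [intervalIntegral.integral_eq_sub_of_hasDerivAt h
    (by apply Continuous.intervalIntegrable; continuity)]
  field_simp
  simp only [mul_zero, zero_mul, neg_zero, Real.exp_zero, Real.sin_zero, Real.cos_zero]
  ring

lemma exp_int {t : ℝ} (ht : 0 < t) : ∫ s in Ioi (0:ℝ), Real.exp (-(t * s)) = 1 / t := by
  have := integral_comp_mul_left_Ioi (fun u => Real.exp (-u)) 0 ht
  simp only [mul_zero] at this
  rw [show (fun s => Real.exp (-(t * s))) = (fun s => (fun u => Real.exp (-u)) (t * s)) from rfl,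
    this, integral_exp_neg_Ioi_zero, smul_eq_mul, mul_one, one_div]

lemma exp_integrable {t : ℝ} (ht : 0 < t) :
    IntegrableOn (fun s : ℝ => Real.exp (-(t * s))) (Ioi (0:ℝ)) := by
  simpa [neg_mul] using exp_neg_integrableOn_Ioi 0 ht

lemma cos_add_sin_bound {T : ℝ} (s : ℝ) (hs : 0 < s) :
    Real.exp (-(T * s)) * |Real.cos T + s * Real.sin T|
      ≤ 2 * Real.exp (-(T * s)) * (1 + s ^ 2) := by
  have h1 : |Real.cos T + s * Real.sin T| ≤ 1 + s := by
    calc |Real.cos T + s * Real.sin T| ≤ |Real.cos T| + |s * Real.sin T| := abs_add_le _ _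
    _ ≤ 1 + s * 1 := by
        gcongr
        · exact Real.abs_cos_le_one T
        · rw [abs_mul, abs_of_pos hs]
          gcongr
          exact Real.abs_sin_le_one _
    _ = 1 + s := by ring
  have h2 : (1 : ℝ) + s ≤ 2 * (1 + s ^ 2) := by nlinarith
  calc Real.exp (-(T * s)) * |Real.cos T + s * Real.sin T|
      ≤ Real.exp (-(T * s)) * (2 * (1 + s ^ 2)) := by gcongr; exact h1.trans h2
  _ = 2 * Real.exp (-(T * s)) * (1 + s ^ 2) := by ring

lemma fub {T : ℝ} (hT : 0 < T) :
    Integrable (Function.uncurry fun t s => Real.exp (-(t * s)) * Real.sin t)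
      ((volume.restrict (Ioc (0:ℝ) T)).prod (volume.restrict (Ioi (0:ℝ)))) := by
  have hfc : Continuous (Function.uncurry fun t s : ℝ => Real.exp (-(t * s)) * Real.sin t) := by
    apply Continuous.mul
    · exact (continuous_fst.mul continuous_snd).neg.rexp
    · exact Real.continuous_sin.comp continuous_fst
  rw [integrable_prod_iff hfc.aestronglyMeasurable]
  simp only [Function.uncurry_apply_pair]
  constructor
  · filter_upwards [ae_restrict_mem measurableSet_Ioc] with t ht
    exact (exp_integrable ht.1).mul_const _
  · have hbound : (fun t : ℝ => |Real.sin t| / t)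
        =ᵐ[volume.restrict (Ioc (0:ℝ) T)]
        (fun t => ∫ s in Ioi (0:ℝ), ‖Real.exp (-(t * s)) * Real.sin t‖) := by
      filter_upwards [ae_restrict_mem measurableSet_Ioc] with t ht
      have : ∀ s : ℝ, ‖Real.exp (-(t * s)) * Real.sin t‖
          = Real.exp (-(t * s)) * |Real.sin t| := by
        intro s
        rw [Real.norm_eq_abs, abs_mul, abs_of_pos (Real.exp_pos _)]
      simp only [this]
      rw [MeasureTheory.integral_mul_const, exp_int ht.1]
      ring
    refine Integrable.congr ?_ hbound
    refine Integrable.mono' (g := fun _ : ℝ => (1:ℝ)) ?_ ?_ ?_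
    · exact integrableOn_const (measure_Ioc_lt_top).ne
    · exact (Real.measurable_sin.abs.div measurable_id).aestronglyMeasurable
    · filter_upwards [ae_restrict_mem measurableSet_Ioc] with t ht
      rw [Real.norm_eq_abs, abs_of_nonneg (div_nonneg (abs_nonneg _) ht.1.le)]
      rw [div_le_one ht.1]
      calc |Real.sin t| ≤ |t| := Real.abs_sin_le_abs
      _ = t := abs_of_pos ht.1

lemma dirichlet_bound {T : ℝ} (hT : 0 < T) :
    |(∫ t in (0:ℝ)..T, Real.sin t / t) - π / 2| ≤ 2 / T := by
  have step1 : (∫ t in (0:ℝ)..T, Real.sin t / t)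
      = ∫ t in Ioc (0:ℝ) T, (∫ s in Ioi (0:ℝ), Real.exp (-(t * s)) * Real.sin t) := by
    rw [intervalIntegral.integral_of_le hT.le]
    apply setIntegral_congr_ae measurableSet_Ioc
    filter_upwards with t ht
    rw [show (fun s => Real.exp (-(t * s)) * Real.sin t)
        = (fun s => Real.sin t * Real.exp (-(t * s))) by ext s; ring]
    rw [MeasureTheory.integral_const_mul, exp_int ht.1]
    ring
  have step2 : (∫ t in Ioc (0:ℝ) T, (∫ s in Ioi (0:ℝ), Real.exp (-(t * s)) * Real.sin t))
      = ∫ s in Ioi (0:ℝ), (∫ t in Ioc (0:ℝ) T, Real.exp (-(t * s)) * Real.sin t) :=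
    integral_integral_swap (fub hT)
  have step3 : (∫ s in Ioi (0:ℝ), (∫ t in Ioc (0:ℝ) T, Real.exp (-(t * s)) * Real.sin t))
      = ∫ s in Ioi (0:ℝ),
          (1 - Real.exp (-(T * s)) * (Real.cos T + s * Real.sin T)) / (1 + s ^ 2) := by
    apply MeasureTheory.integral_congr_ae
    filter_upwards with s
    rw [show (∫ t in Ioc (0:ℝ) T, Real.exp (-(t * s)) * Real.sin t)
        = ∫ t in (0:ℝ)..T, Real.exp (-(t * s)) * Real.sin t by
      rw [intervalIntegral.integral_of_le hT.le]]
    exact inner_int s T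
  set R := ∫ s in Ioi (0:ℝ), Real.exp (-(T * s)) * (Real.cos T + s * Real.sin T) / (1 + s ^ 2)
    with hR
  have hRint : IntegrableOn
      (fun s => Real.exp (-(T * s)) * (Real.cos T + s * Real.sin T) / (1 + s ^ 2))
      (Ioi (0:ℝ)) := by
    refine Integrable.mono' (g := fun s => 2 * Real.exp (-(T * s)))
      ((exp_integrable hT).const_mul 2) ?_ ?_
    · apply Continuous.aestronglyMeasurable
      apply Continuous.div (by continuity) (by continuity)
      intro s; positivity
    · filter_upwards [ae_restrict_mem measurableSet_Ioi] with s hs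
      rw [Real.norm_eq_abs, abs_div, abs_of_nonneg (by positivity : (0:ℝ) ≤ 1 + s ^ 2),
        abs_mul, abs_of_pos (Real.exp_pos _), div_le_iff₀ (by positivity)]
      exact cos_add_sin_bound s hs
  have step4 : (∫ s in Ioi (0:ℝ),
      (1 - Real.exp (-(T * s)) * (Real.cos T + s * Real.sin T)) / (1 + s ^ 2)) = π / 2 - R := by
    have heq : ∀ s : ℝ, (1 - Real.exp (-(T * s)) * (Real.cos T + s * Real.sin T)) / (1 + s ^ 2)
        = (1 + s ^ 2)⁻¹ - Real.exp (-(T * s)) * (Real.cos T + s * Real.sin T) / (1 + s ^ 2) := by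
      intro s
      have : (1 : ℝ) + s ^ 2 ≠ 0 := by positivity
      field_simp
    simp_rw [heq]
    rw [integral_sub integrable_inv_one_add_sq.integrableOn hRint,
      integral_Ioi_inv_one_add_sq, Real.arctan_zero, sub_zero, hR]
  have step5 : |R| ≤ 2 / T := by
    rw [hR]
    have := MeasureTheory.norm_integral_le_of_norm_le (μ := volume.restrict (Ioi (0:ℝ)))
      (f := fun s => Real.exp (-(T * s)) * (Real.cos T + s * Real.sin T) / (1 + s ^ 2))
      (g := fun s => 2 * Real.exp (-(T * s))) ((exp_integrable hT).const_mul 2) ?_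
    · rw [Real.norm_eq_abs] at this
      refine this.trans ?_
      rw [MeasureTheory.integral_const_mul, exp_int hT, mul_one_div]
    · filter_upwards [ae_restrict_mem measurableSet_Ioi] with s hs
      rw [Real.norm_eq_abs, abs_div, abs_of_nonneg (by positivity : (0:ℝ) ≤ 1 + s ^ 2),
        abs_mul, abs_of_pos (Real.exp_pos _), div_le_iff₀ (by positivity)]
      exact cos_add_sin_bound s hs
  rw [step1, step2, step3, step4]
  simpa using step5

theorem stmt1 (x C : ℝ) (hx : x ≠ 0) (hC : 0 < C) :
    |(∫ s in (0:ℝ)..C, Real.sin (s * x) / s) - Real.sign x * (π / 2)| ≤ 2 / (C * |x|) := by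
  have hsub : (∫ s in (0:ℝ)..C, Real.sin (s * x) / s)
      = ∫ u in (0:ℝ)..(C * x), Real.sin u / u := by
    have h1 : ∀ s : ℝ, Real.sin (s * x) / s = x * (Real.sin (s * x) / (s * x)) := by
      intro s
      rcases eq_or_ne s 0 with rfl | hs
      · simp
      · field_simp
    simp_rw [h1]
    rw [intervalIntegral.integral_const_mul,
      intervalIntegral.integral_comp_mul_right (fun u => Real.sin u / u) hx]
    simp only [smul_eq_mul, zero_mul]
    field_simp
  rcases hx.lt_or_gt with hneg | hpos
  · have heven : (∫ u in (0:ℝ)..(C * x), Real.sin u / u)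
        = - ∫ u in (0:ℝ)..(-(C * x)), Real.sin u / u := by
      have : ∀ u : ℝ, Real.sin u / u = Real.sin (-u) / (-u) := by
        intro u; rw [Real.sin_neg]; rcases eq_or_ne u 0 with rfl|h; · simp
        field_simp
      rw [show (∫ u in (0:ℝ)..(C * x), Real.sin u / u)
          = ∫ u in (0:ℝ)..(C * x), Real.sin (-u) / (-u) by
        apply intervalIntegral.integral_congr; intro u _; exact this u]
      rw [intervalIntegral.integral_comp_neg (fun u => Real.sin u / u)]
      rw [neg_zero, intervalIntegral.integral_symm]
    rw [hsub, heven, Real.sign_of_neg hneg]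
    have hT : 0 < -(C * x) := by nlinarith
    have := dirichlet_bound hT
    rw [show |-(∫ u in (0:ℝ)..(-(C*x)), Real.sin u / u) - -1 * (π/2)|
        = |(∫ u in (0:ℝ)..(-(C*x)), Real.sin u / u) - π/2| by rw [← abs_neg]; congr 1; ring]
    refine this.trans (le_of_eq ?_)
    rw [abs_of_neg hneg]; ring
  · rw [hsub, Real.sign_of_pos hpos, one_mul]
    have hT : 0 < C * x := by positivity
    refine (dirichlet_bound hT).trans (le_of_eq ?_)
    rw [abs_of_pos hpos]
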